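/- Suppose φ: ℝ → ℝ satisfies |φ(x)| ≤ C(1 + |x|^p) for all x and some C > 0, p ∈ ℕ. Then for y ∼ N(0,1), the map μ ↦ Var(φ(σy + μ)) is differentiable and |∂_μ Var(φ(σy + μ))| ≤ R·σ^{−1}·(1 + σ^{2p} + |μ|^{2p}) for a constant R depending only on p and C, uniformly in μ ∈ ℝ and σ > 0. -/

import Mathlib

open MeasureTheory ProbabilityTheory
open Real Set
open scoped NNReal ENNReal

lemma aux_pow_add_le (a b : ℝ) (ha : 0 ≤ a) (hb : 0 ≤ b) (n : ℕ) :
    (a + b) ^ n ≤ 2 ^ n * (a ^ n + b ^ n) := by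
  have h : a + b ≤ 2 * max a b := by
    rcases le_total a b with h | h
    · nlinarith [le_max_left a b, le_max_right a b]
    · nlinarith [le_max_left a b, le_max_right a b]
  calc (a + b) ^ n ≤ (2 * max a b) ^ n :=
        pow_le_pow_left₀ (by positivity) h n
    _ = 2 ^ n * (max a b) ^ n := mul_pow 2 _ n
    _ ≤ 2 ^ n * (a ^ n + b ^ n) := by
        gcongr
        rcases max_cases a b with ⟨h1, _⟩ | ⟨h1, _⟩ <;> rw [h1] <;>
          nlinarith [pow_nonneg ha n, pow_nonneg hb n]

lemma aux_int_abs_pow_gauss (q : ℕ) {b : ℝ} (hb : 0 < b) :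
    Integrable fun x : ℝ => |x| ^ q * Real.exp (-b * x ^ 2) := by
  have hq : (-1 : ℝ) < q := lt_of_lt_of_le neg_one_lt_zero (Nat.cast_nonneg q)
  have h := integrable_rpow_mul_exp_neg_mul_sq hb hq
  have hIoi : IntegrableOn (fun x : ℝ => |x| ^ q * Real.exp (-b * x ^ 2)) (Ioi 0) := by
    refine (h.integrableOn (s := Ioi 0)).congr_fun ?_ measurableSet_Ioi
    intro x hx
    simp only
    rw [Real.rpow_natCast, abs_of_pos (mem_Ioi.mp hx)]
  rw [← integrableOn_univ, ← Iio_union_Ici (a := (0:ℝ)), integrableOn_union]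
  constructor
  · rw [← (Measure.measurePreserving_neg (volume : Measure ℝ)).integrableOn_comp_preimage
        (Homeomorph.neg ℝ).measurableEmbedding]
    simp only [Function.comp_def, neg_sq, abs_neg, neg_preimage, neg_Iio, neg_neg, neg_zero]
    exact hIoi
  · rwa [integrableOn_Ici_iff_integrableOn_Ioi]

lemma aux_integral_gaussianReal (f : ℝ → ℝ) (m : ℝ) {v : ℝ≥0} (hv : v ≠ 0) :
    ∫ x, f x ∂(gaussianReal m v) = ∫ x, f x * gaussianPDFReal m v x := by
  rw [gaussianReal_of_var_ne_zero m hv, gaussianPDF_def]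
  have h : (fun x => ENNReal.ofReal (gaussianPDFReal m v x))
      = fun x => ((gaussianPDFReal m v x).toNNReal : ℝ≥0∞) := rfl
  rw [h, integral_withDensity_eq_integral_smul ((measurable_gaussianPDFReal m v).real_toNNReal)]
  congr 1; ext x
  rw [NNReal.smul_def, Real.coe_toNNReal _ (gaussianPDFReal_nonneg m v x), smul_eq_mul, mul_comm]

lemma aux_integrable_gaussianReal_iff (f : ℝ → ℝ) (m : ℝ) {v : ℝ≥0} (hv : v ≠ 0) :
    Integrable f (gaussianReal m v) ↔ Integrable (fun x => f x * gaussianPDFReal m v x) := by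
  rw [gaussianReal_of_var_ne_zero m hv, gaussianPDF_def,
    integrable_withDensity_iff (measurable_gaussianPDFReal m v).ennreal_ofReal
      (ae_of_all _ fun x => ENNReal.ofReal_lt_top)]
  simp_rw [ENNReal.toReal_ofReal (gaussianPDFReal_nonneg m v _)]

lemma aux_map_affine {σ : ℝ} (hσ : 0 < σ) (m : ℝ) :
    (gaussianReal 0 1).map (fun y => σ * y + m) = gaussianReal m ⟨σ^2, sq_nonneg σ⟩ := by
  have h1 : (fun y : ℝ => σ * y + m) = (fun y => y + m) ∘ (fun y => σ * y) := rfl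
  have hgm : Measurable fun y : ℝ => y + m := measurable_add_const m
  have hfm : Measurable fun y : ℝ => σ * y := measurable_const_mul σ
  rw [h1, ← Measure.map_map hgm hfm]
  have h2 : (fun y : ℝ => σ * y) = (σ * ·) := rfl
  rw [h2, gaussianReal_map_const_mul]
  have h3 : (fun y : ℝ => y + m) = (· + m) := rfl
  rw [h3, gaussianReal_map_add_const]
  rw [mul_zero, zero_add, mul_one]
  rfl

lemma aux_v_ne_zero {σ : ℝ} (hσ : 0 < σ) : (⟨σ^2, sq_nonneg σ⟩ : ℝ≥0) ≠ 0 := by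
  intro h
  exact ne_of_gt (pow_pos hσ 2) (congrArg Subtype.val h)

lemma aux_integral_comp_affine (Ψ : ℝ → ℝ) (hΨ : Measurable Ψ) {σ : ℝ} (hσ : 0 < σ) (m : ℝ) :
    ∫ y, Ψ (σ * y + m) ∂(gaussianReal 0 1)
      = ∫ x, Ψ x * gaussianPDFReal m ⟨σ^2, sq_nonneg σ⟩ x := by
  rw [← aux_integral_gaussianReal Ψ m (aux_v_ne_zero hσ), ← aux_map_affine hσ m,
    integral_map (by fun_prop) hΨ.aestronglyMeasurable]

lemma aux_integrable_comp_affine_iff (Ψ : ℝ → ℝ) (hΨ : Measurable Ψ) {σ : ℝ} (hσ : 0 < σ)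
    (m : ℝ) :
    Integrable (fun x => Ψ x * gaussianPDFReal m ⟨σ^2, sq_nonneg σ⟩ x) volume ↔
      Integrable (fun y => Ψ (σ * y + m)) (gaussianReal 0 1) := by
  rw [← aux_integrable_gaussianReal_iff Ψ m (aux_v_ne_zero hσ), ← aux_map_affine hσ m,
    integrable_map_measure hΨ.aestronglyMeasurable (by fun_prop)]
  rfl

lemma aux_gaussMoment (k : ℕ) : Integrable (fun y : ℝ => |y| ^ k) (gaussianReal 0 1) := by
  rw [aux_integrable_gaussianReal_iff _ _ one_ne_zero]
  have h := (aux_int_abs_pow_gauss k (b := 1/2) (by norm_num)).const_mul ((√(2*π))⁻¹)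
  refine h.congr (ae_of_all _ fun x => ?_)
  simp only [gaussianPDFReal, NNReal.coe_one, mul_one, sub_zero]
  rw [show (-(1/2) * x^2 : ℝ) = -x^2/2 by ring]
  ring

lemma aux_hasDerivAt_pdf (v : ℝ≥0) (hv : 0 < (v:ℝ)) (x μ : ℝ) :
    HasDerivAt (fun m => gaussianPDFReal m v x) ((x - μ) / v * gaussianPDFReal μ v x) μ := by
  have h1 : HasDerivAt (fun m : ℝ => -(x - m)^2 / (2*(v:ℝ))) ((x - μ)/v) μ := by
    have h0 : HasDerivAt (fun m : ℝ => x - m) (-1) μ := (hasDerivAt_id μ).const_sub x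
    have h2 := ((h0.fun_pow 2).neg).div_const (2*(v:ℝ))
    refine h2.congr_deriv ?_
    field_simp
    ring
  have h2 := (h1.exp).const_mul ((√(2*π*v))⁻¹)
  simp only [gaussianPDFReal]
  refine h2.congr_deriv ?_
  ring

lemma aux_abs_pow_le (σ y m : ℝ) (hσ : 0 ≤ σ) (q : ℕ) :
    |σ * y + m| ^ q ≤ 2 ^ q * (σ ^ q * |y| ^ q + |m| ^ q) := by
  calc |σ*y+m|^q ≤ (σ*|y| + |m|)^q := by
        refine pow_le_pow_left₀ (abs_nonneg _) ((abs_add_le _ _).trans ?_) q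
        rw [abs_mul, abs_of_nonneg hσ]
    _ ≤ 2^q * ((σ*|y|)^q + |m|^q) := aux_pow_add_le _ _ (by positivity) (abs_nonneg _) q
    _ = 2^q * (σ^q*|y|^q + |m|^q) := by rw [mul_pow]

lemma aux_pow_le (t : ℝ) (ht : 0 ≤ t) {j k : ℕ} (h : j ≤ k) : t ^ j ≤ 1 + t ^ k := by
  rcases le_total t 1 with h1 | h1
  · exact (pow_le_one₀ ht h1).trans (by nlinarith [pow_nonneg ht k])
  · have := pow_le_pow_right₀ h1 h
    nlinarith [pow_nonneg ht j]

lemma aux_comp_integrable (Ψ : ℝ → ℝ) (hΨ : Measurable Ψ) {D : ℝ} (hD : 0 ≤ D) (q : ℕ)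
    (hb : ∀ x, |Ψ x| ≤ D * (1 + |x| ^ q)) {σ : ℝ} (hσ : 0 < σ) (m : ℝ) :
    Integrable (fun y => Ψ (σ * y + m)) (gaussianReal 0 1) := by
  refine Integrable.mono' ((integrable_const (D * (1 + 2^q * |m|^q))).add
      ((aux_gaussMoment q).const_mul (D * 2^q * σ^q)))
    (hΨ.comp (by fun_prop : Measurable fun y : ℝ => σ*y+m)).aestronglyMeasurable
    (ae_of_all _ fun y => ?_)
  have h1 := hb (σ*y+m)
  have h2 := aux_abs_pow_le σ y m hσ.le q
  have h3 : (0:ℝ) ≤ 2^q * |m|^q := by positivity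
  have h4 : (0:ℝ) ≤ 2^q * σ^q * |y|^q := by positivity
  simp only [Function.comp, Real.norm_eq_abs, Pi.add_apply]
  have h5 := mul_le_mul_of_nonneg_left h2 hD
  linarith [h1, h5]

set_option maxHeartbeats 2000000 in
lemma aux_core (q : ℕ) :
    ∃ K : ℝ, 0 < K ∧ ∀ D : ℝ, 0 ≤ D → ∀ Ψ : ℝ → ℝ, Measurable Ψ →
      (∀ x, |Ψ x| ≤ D * (1 + |x| ^ q)) → ∀ σ : ℝ, 0 < σ → ∀ μ : ℝ,
      ∃ d : ℝ, HasDerivAt (fun m => ∫ y, Ψ (σ * y + m) ∂(gaussianReal 0 1)) d μ ∧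
        |d| ≤ K * D * σ⁻¹ * (1 + σ ^ q + |μ| ^ q) := by
  set γ := gaussianReal 0 1 with hγ
  set M1 : ℝ := ∫ y, |y| ^ 1 ∂γ with hM1
  set Mq1 : ℝ := ∫ y, |y| ^ (q+1) ∂γ with hMq1
  have hM1nn : 0 ≤ M1 := integral_nonneg fun y => by positivity
  have hMq1nn : 0 ≤ Mq1 := integral_nonneg fun y => by positivity
  refine ⟨2^q * (M1 + Mq1 + 1), by positivity, fun D hD Ψ hΨ hb σ hσ μ => ?_⟩
  set v : ℝ≥0 := ⟨σ^2, sq_nonneg σ⟩ with hvdef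
  have hvc : (v : ℝ) = σ^2 := rfl
  have hvpos : (0:ℝ) < v := by rw [hvc]; positivity
  set c : ℝ := (√(2*π*(v:ℝ)))⁻¹ * Real.exp (1/(2*(v:ℝ))) with hc
  have hcpos : 0 < c := by positivity
  set E : ℝ := D * (1 + 2^q + 2^q * |μ|^q) * 4 / (v:ℝ) * c with hE
  have hEnn : 0 ≤ E := by positivity
  -- the dominated derivative theorem
  have hcomp : ∀ m : ℝ, Integrable (fun y => Ψ (σ * y + m)) γ :=
    fun m => aux_comp_integrable Ψ hΨ hD q hb hσ m
  have hbineq : ∀ᵐ (x : ℝ), ∀ m ∈ Metric.ball μ 1,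
      ‖Ψ x * ((x - m)/(v:ℝ) * gaussianPDFReal m v x)‖
        ≤ E * ((1 + |x - μ|^(q+1)) * Real.exp (-(4*(v:ℝ))⁻¹ * (x-μ)^2)) := by
    refine ae_of_all _ fun x m hm => ?_
    have hmμ : |m - μ| ≤ 1 := by
      rw [Metric.mem_ball, Real.dist_eq] at hm; exact hm.le
    set t : ℝ := |x - μ| with ht
    have htnn : 0 ≤ t := abs_nonneg _
    have hxm : |x - m| ≤ t + 1 := by
      calc |x - m| = |(x - μ) + (μ - m)| := by congr 1; ring
        _ ≤ |x - μ| + |μ - m| := abs_add_le _ _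
        _ ≤ t + 1 := by rw [abs_sub_comm μ m]; linarith
    have hpdf : gaussianPDFReal m v x ≤ c * Real.exp (-(4*(v:ℝ))⁻¹ * (x-μ)^2) := by
      rw [gaussianPDFReal]
      have hexp : -(x-m)^2/(2*(v:ℝ)) ≤ 1/(2*(v:ℝ)) + -(4*(v:ℝ))⁻¹ * (x-μ)^2 := by
        rw [show (1/(2*(v:ℝ)) + -(4*(v:ℝ))⁻¹ * (x-μ)^2 : ℝ)
            = (2 - (x-μ)^2)/(4*(v:ℝ)) by field_simp; ring]
        rw [div_le_div_iff₀ (by positivity) (by positivity)]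
        have h2 : (m - μ)^2 ≤ 1 := by nlinarith [abs_nonneg (m - μ), sq_abs (m - μ)]
        have hkey : (0:ℝ) ≤ 2 - (x-μ)^2 + 2*(x-m)^2 := by
          nlinarith [sq_nonneg (x - m - (m - μ)), h2]
        nlinarith [mul_nonneg hvpos.le hkey]
      calc (√(2*π*(v:ℝ)))⁻¹ * rexp (-(x-m)^2/(2*(v:ℝ)))
          ≤ (√(2*π*(v:ℝ)))⁻¹ * rexp (1/(2*(v:ℝ)) + -(4*(v:ℝ))⁻¹ * (x-μ)^2) := by
            gcongr
        _ = c * Real.exp (-(4*(v:ℝ))⁻¹ * (x-μ)^2) := by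
            rw [Real.exp_add, hc]; ring
    have hΨx : |Ψ x| ≤ D * (1 + 2^q + 2^q*|μ|^q) * (1 + t^q) := by
      have h1 := hb x
      have h2 : |x|^q ≤ 2^q * (1^q * |x - μ|^q + |μ|^q) := by
        have := aux_abs_pow_le 1 (x - μ) μ zero_le_one q
        simpa using this
      have h3 : (0:ℝ) ≤ t^q := by positivity
      have h4 : (0:ℝ) ≤ 2^q * |μ|^q := by positivity
      have h5 : (1:ℝ) ≤ 2^q := one_le_pow₀ one_le_two
      rw [one_pow, ← ht] at h2
      have h6 := mul_le_mul_of_nonneg_left h2 hD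
      have h7 : (0:ℝ) ≤ D * 2^q := by positivity
      have h8 : (0:ℝ) ≤ D * t^q := by positivity
      have h9 : (0:ℝ) ≤ D * (2^q * (|μ|^q * t^q)) := by positivity
      linarith [h1, h6]
    have hprod : (1 + t^q) * (t + 1) ≤ 4 * (1 + t^(q+1)) := by
      have h1 : t ^ 1 ≤ 1 + t^(q+1) := aux_pow_le t htnn (by omega)
      have h2 : t ^ q ≤ 1 + t^(q+1) := aux_pow_le t htnn (by omega)
      have h3 : t ^ q * t = t ^ (q+1) := (pow_succ t q).symm
      rw [pow_one] at h1
      nlinarith [pow_nonneg htnn (q+1)]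
    -- assemble
    have hpdfnn : 0 ≤ gaussianPDFReal m v x := gaussianPDFReal_nonneg m v x
    rw [Real.norm_eq_abs, abs_mul, abs_mul, abs_div]
    have hvabs : |(v:ℝ)| = (v:ℝ) := abs_of_pos hvpos
    rw [hvabs, abs_of_nonneg hpdfnn]
    calc |Ψ x| * (|x - m| / (v:ℝ) * gaussianPDFReal m v x)
        ≤ (D * (1 + 2^q + 2^q*|μ|^q) * (1 + t^q)) * ((t + 1) / (v:ℝ)
            * (c * Real.exp (-(4*(v:ℝ))⁻¹ * (x-μ)^2))) := by
          have e1 : (0:ℝ) < (v:ℝ) := hvpos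
          gcongr
      _ ≤ E * ((1 + |x - μ|^(q+1)) * Real.exp (-(4*(v:ℝ))⁻¹ * (x-μ)^2)) := by
          rw [hE, ← ht]
          have hexpnn : 0 ≤ Real.exp (-(4*(v:ℝ))⁻¹ * (x-μ)^2) := (Real.exp_pos _).le
          have hD' : 0 ≤ D * (1 + 2^q + 2^q*|μ|^q) := by positivity
          calc (D * (1 + 2^q + 2^q*|μ|^q) * (1 + t^q)) * ((t + 1) / (v:ℝ)
                * (c * Real.exp (-(4*(v:ℝ))⁻¹ * (x-μ)^2)))
              = (D * (1 + 2^q + 2^q*|μ|^q) / (v:ℝ) * c) * (((1 + t^q) * (t + 1))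
                  * Real.exp (-(4*(v:ℝ))⁻¹ * (x-μ)^2)) := by ring
            _ ≤ (D * (1 + 2^q + 2^q*|μ|^q) / (v:ℝ) * c) * ((4 * (1 + t^(q+1)))
                  * Real.exp (-(4*(v:ℝ))⁻¹ * (x-μ)^2)) := by
                have : (0:ℝ) ≤ D * (1 + 2^q + 2^q*|μ|^q) / (v:ℝ) * c := by positivity
                gcongr
            _ = D * (1 + 2^q + 2^q*|μ|^q) * 4 / (v:ℝ) * c * ((1 + t^(q+1))
                  * Real.exp (-(4*(v:ℝ))⁻¹ * (x-μ)^2)) := by ring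
  have hbd4 : (0:ℝ) < (4*(v:ℝ))⁻¹ := by positivity
  have hboundint : Integrable (fun x : ℝ =>
      E * ((1 + |x - μ|^(q+1)) * Real.exp (-(4*(v:ℝ))⁻¹ * (x-μ)^2))) := by
    have i0 : Integrable (fun x : ℝ => Real.exp (-(4*(v:ℝ))⁻¹ * (x-μ)^2)) := by
      simpa using (aux_int_abs_pow_gauss 0 hbd4).comp_sub_right μ
    have i1 : Integrable (fun x : ℝ => |x-μ|^(q+1) * Real.exp (-(4*(v:ℝ))⁻¹ * (x-μ)^2)) :=
      (aux_int_abs_pow_gauss (q+1) hbd4).comp_sub_right μ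
    refine ((i0.add i1).const_mul E).congr (ae_of_all _ fun x => ?_)
    simp only [Pi.add_apply]
    ring
  have hdiff : ∀ᵐ (x : ℝ), ∀ m ∈ Metric.ball μ 1,
      HasDerivAt (fun m => Ψ x * gaussianPDFReal m v x)
        (Ψ x * ((x - m)/(v:ℝ) * gaussianPDFReal m v x)) m :=
    ae_of_all _ fun x m _ => (aux_hasDerivAt_pdf v hvpos x m).const_mul (Ψ x)
  have key := hasDerivAt_integral_of_dominated_loc_of_deriv_le (μ := volume) (x₀ := μ)
    (F := fun m x => Ψ x * gaussianPDFReal m v x)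
    (F' := fun m x => Ψ x * ((x - m)/(v:ℝ) * gaussianPDFReal m v x))
    (Metric.ball_mem_nhds μ one_pos)
    (Filter.Eventually.of_forall fun m => (hΨ.mul (measurable_gaussianPDFReal m v)).aestronglyMeasurable)
    ((aux_integrable_comp_affine_iff Ψ hΨ hσ μ).2 (hcomp μ))
    ((hΨ.mul (((measurable_id.sub_const μ).div_const _).mul
        (measurable_gaussianPDFReal μ v))).aestronglyMeasurable)
    hbineq hboundint hdiff
  refine ⟨∫ x, Ψ x * ((x - μ)/(v:ℝ) * gaussianPDFReal μ v x), ?_, ?_⟩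
  · have funeq : (fun m => ∫ y, Ψ (σ * y + m) ∂γ)
        = fun m => ∫ x, Ψ x * gaussianPDFReal m v x :=
      funext fun m => aux_integral_comp_affine Ψ hΨ hσ m
    rw [funeq]
    exact key.2
  · -- bound the derivative
    have habs : |∫ x, Ψ x * ((x - μ)/(v:ℝ) * gaussianPDFReal μ v x)|
        ≤ ∫ x, |Ψ x * ((x - μ)/(v:ℝ) * gaussianPDFReal μ v x)| := by
      simpa only [Real.norm_eq_abs] using
        norm_integral_le_integral_norm (μ := volume)
          (fun x => Ψ x * ((x - μ)/(v:ℝ) * gaussianPDFReal μ v x))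
    have hgmeas : Measurable (fun x => |Ψ x| * (|x - μ| / (v:ℝ))) :=
      (hΨ.abs.mul ((measurable_id.sub_const μ).abs.div_const _))
    have heq1 : ∫ x, |Ψ x * ((x - μ)/(v:ℝ) * gaussianPDFReal μ v x)|
        = ∫ x, (|Ψ x| * (|x - μ| / (v:ℝ))) * gaussianPDFReal μ v x := by
      refine integral_congr_ae (ae_of_all _ fun x => ?_)
      dsimp only
      rw [abs_mul, abs_mul, abs_div, abs_of_pos hvpos,
        abs_of_nonneg (gaussianPDFReal_nonneg μ v x)]
      ring
    have heq2 : ∫ x, (|Ψ x| * (|x - μ| / (v:ℝ))) * gaussianPDFReal μ v x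
        = ∫ y, |Ψ (σ * y + μ)| * (|σ * y + μ - μ| / (v:ℝ)) ∂γ :=
      (aux_integral_comp_affine (fun x => |Ψ x| * (|x - μ| / (v:ℝ))) hgmeas hσ μ).symm
    have heq3 : ∫ y, |Ψ (σ * y + μ)| * (|σ * y + μ - μ| / (v:ℝ)) ∂γ
        = ∫ y, σ⁻¹ * (|Ψ (σ*y+μ)| * |y|) ∂γ := by
      refine integral_congr_ae (ae_of_all _ fun y => ?_)
      simp only [add_sub_cancel_right]
      rw [hvc, abs_mul, abs_of_pos hσ, sq, mul_div_mul_left _ _ (ne_of_gt hσ),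
        div_eq_inv_mul]
      ring
    have hintR : Integrable (fun y : ℝ => σ⁻¹ * (D * (|y|^1 + (2^q * σ^q * |y|^(q+1)
        + 2^q * |μ|^q * |y|^1)))) γ :=
      (((aux_gaussMoment 1).add (((aux_gaussMoment (q+1)).const_mul _).add
        ((aux_gaussMoment 1).const_mul _))).const_mul D).const_mul σ⁻¹
    have hmono : ∫ y, σ⁻¹ * (|Ψ (σ*y+μ)| * |y|) ∂γ
        ≤ ∫ y, σ⁻¹ * (D * (|y|^1 + (2^q * σ^q * |y|^(q+1) + 2^q * |μ|^q * |y|^1))) ∂γ := by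
      refine integral_mono_of_nonneg (ae_of_all _ fun y => by positivity) hintR
        (ae_of_all _ fun y => ?_)
      simp only
      have h1 := hb (σ*y+μ)
      have h2 := aux_abs_pow_le σ y μ hσ.le q
      have h3 : |y|^q * |y| = |y|^(q+1) := (pow_succ |y| q).symm
      have hσi : (0:ℝ) < σ⁻¹ := by positivity
      have habsy : (0:ℝ) ≤ |y| := abs_nonneg y
      rw [pow_one]
      have step : |Ψ (σ*y+μ)| * |y| ≤ D * (|y| + (2^q * σ^q * |y|^(q+1) + 2^q * |μ|^q * |y|)) := by
        calc |Ψ (σ*y+μ)| * |y| ≤ (D * (1 + |σ*y+μ|^q)) * |y| := by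
              gcongr
          _ ≤ (D * (1 + 2^q * (σ^q * |y|^q + |μ|^q))) * |y| := by
              have : (0:ℝ) ≤ D := hD
              gcongr
          _ = D * (|y| + (2^q * σ^q * (|y|^q * |y|) + 2^q * |μ|^q * |y|)) := by ring
          _ = D * (|y| + (2^q * σ^q * |y|^(q+1) + 2^q * |μ|^q * |y|)) := by rw [h3]
      nlinarith [step]
    have hval : ∫ y, σ⁻¹ * (D * (|y|^1 + (2^q * σ^q * |y|^(q+1) + 2^q * |μ|^q * |y|^1))) ∂γ
        = σ⁻¹ * (D * (M1 + (2^q * σ^q * Mq1 + 2^q * |μ|^q * M1))) := by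
      have g2 : Integrable (fun y : ℝ => 2^q*σ^q*|y|^(q+1)) γ := (aux_gaussMoment (q+1)).const_mul _
      have g3 : Integrable (fun y : ℝ => 2^q*|μ|^q*|y|^1) γ := (aux_gaussMoment 1).const_mul _
      have g23 : Integrable (fun y : ℝ => 2^q*σ^q*|y|^(q+1) + 2^q*|μ|^q*|y|^1) γ := g2.add g3
      rw [integral_const_mul, integral_const_mul, integral_add (aux_gaussMoment 1) g23,
        integral_add g2 g3, integral_const_mul, integral_const_mul]
    have hfinal : σ⁻¹ * (D * (M1 + (2^q * σ^q * Mq1 + 2^q * |μ|^q * M1)))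
        ≤ 2^q * (M1 + Mq1 + 1) * D * σ⁻¹ * (1 + σ^q + |μ|^q) := by
      have hσi : (0:ℝ) < σ⁻¹ := by positivity
      have hX : M1 + (2^q * σ^q * Mq1 + 2^q * |μ|^q * M1)
          ≤ 2^q * (M1 + Mq1 + 1) * (1 + σ^q + |μ|^q) := by
        have h5 : (1:ℝ) ≤ 2^q := one_le_pow₀ one_le_two
        have h6 : (0:ℝ) < σ^q := by positivity
        have h7 : (0:ℝ) ≤ |μ|^q := by positivity
        have hA : (0:ℝ) ≤ 2^q := by positivity
        nlinarith [mul_nonneg (sub_nonneg.2 h5) hM1nn, mul_nonneg hA hMq1nn,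
          mul_nonneg (mul_nonneg hA hM1nn) h6.le, mul_nonneg hA h6.le,
          mul_nonneg (mul_nonneg hA h7) hMq1nn, mul_nonneg hA h7]
      calc σ⁻¹ * (D * (M1 + (2^q * σ^q * Mq1 + 2^q * |μ|^q * M1)))
          ≤ σ⁻¹ * (D * (2^q * (M1 + Mq1 + 1) * (1 + σ^q + |μ|^q))) := by gcongr
        _ = 2^q * (M1 + Mq1 + 1) * D * σ⁻¹ * (1 + σ^q + |μ|^q) := by ring
    calc |∫ x, Ψ x * ((x - μ)/(v:ℝ) * gaussianPDFReal μ v x)|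
        ≤ ∫ x, |Ψ x * ((x - μ)/(v:ℝ) * gaussianPDFReal μ v x)| := habs
      _ = ∫ y, σ⁻¹ * (|Ψ (σ*y+μ)| * |y|) ∂γ := by rw [heq1, heq2, heq3]
      _ ≤ ∫ y, σ⁻¹ * (D * (|y|^1 + (2^q * σ^q * |y|^(q+1) + 2^q * |μ|^q * |y|^1))) ∂γ := hmono
      _ = σ⁻¹ * (D * (M1 + (2^q * σ^q * Mq1 + 2^q * |μ|^q * M1))) := hval
      _ ≤ 2^q * (M1 + Mq1 + 1) * D * σ⁻¹ * (1 + σ^q + |μ|^q) := hfinal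

lemma aux_mean_bound (q : ℕ) :
    ∃ K : ℝ, 0 < K ∧ ∀ D : ℝ, 0 ≤ D → ∀ Ψ : ℝ → ℝ, Measurable Ψ →
      (∀ x, |Ψ x| ≤ D * (1 + |x| ^ q)) → ∀ σ : ℝ, 0 < σ → ∀ μ : ℝ,
      |∫ y, Ψ (σ * y + μ) ∂(gaussianReal 0 1)| ≤ K * D * (1 + σ ^ q + |μ| ^ q) := by
  set γ := gaussianReal 0 1 with hγ
  set Mq : ℝ := ∫ y, |y| ^ q ∂γ with hMq
  have hMqnn : 0 ≤ Mq := integral_nonneg fun y => by positivity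
  refine ⟨2^q * (Mq + 2), by positivity, fun D hD Ψ hΨ hb σ hσ μ => ?_⟩
  have habs : |∫ y, Ψ (σ * y + μ) ∂γ| ≤ ∫ y, |Ψ (σ * y + μ)| ∂γ := by
    simpa only [Real.norm_eq_abs] using
      norm_integral_le_integral_norm (μ := γ) (fun y => Ψ (σ * y + μ))
  have hint : Integrable (fun y : ℝ => D * (1 + 2^q * |μ|^q) + D * 2^q * σ^q * |y|^q) γ :=
    (integrable_const _).add ((aux_gaussMoment q).const_mul _)
  have hmono : ∫ y, |Ψ (σ * y + μ)| ∂γ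
      ≤ ∫ y, (D * (1 + 2^q * |μ|^q) + D * 2^q * σ^q * |y|^q) ∂γ := by
    refine integral_mono_of_nonneg (ae_of_all _ fun y => abs_nonneg _) hint
      (ae_of_all _ fun y => ?_)
    have h1 := hb (σ*y+μ)
    have h2 := aux_abs_pow_le σ y μ hσ.le q
    have h5 := mul_le_mul_of_nonneg_left h2 hD
    simp only
    linarith [h1, h5]
  have hval : ∫ y, (D * (1 + 2^q * |μ|^q) + D * 2^q * σ^q * |y|^q) ∂γ
      = D * (1 + 2^q * |μ|^q) + D * 2^q * σ^q * Mq := by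
    rw [integral_add (integrable_const _) ((aux_gaussMoment q).const_mul _),
      integral_const, integral_const_mul]
    simp [hγ]
    exact Or.inl rfl
  have hfin : D * (1 + 2^q * |μ|^q) + D * 2^q * σ^q * Mq
      ≤ 2^q * (Mq + 2) * D * (1 + σ^q + |μ|^q) := by
    have h5 : (1:ℝ) ≤ 2^q := one_le_pow₀ one_le_two
    have hA : (0:ℝ) ≤ 2^q := by positivity
    have h6 : (0:ℝ) < σ^q := by positivity
    have h7 : (0:ℝ) ≤ |μ|^q := by positivity
    have hDD : 0 ≤ D := hD
    nlinarith [mul_nonneg hDD (mul_nonneg hA h7), mul_nonneg hDD (mul_nonneg hA h6.le),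
      mul_nonneg hDD (mul_nonneg (mul_nonneg hA hMqnn) h7),
      mul_nonneg hDD (mul_nonneg (mul_nonneg hA hMqnn) h6.le),
      mul_nonneg hDD (mul_nonneg hA hMqnn), mul_nonneg hDD hA,
      mul_nonneg (mul_nonneg hDD (sub_nonneg.2 h5)) h7,
      mul_nonneg hDD h7, mul_nonneg hDD h6.le]
  linarith [habs, hmono, hval.le, hval.ge, hfin]

/-- For polynomially bounded `φ` (`|φ(x)| ≤ C(1+|x|^p)`) and `y ∼ N(0,1)`, the map
`μ ↦ Var φ(σ y + μ)` is differentiable, with derivative bounded by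
`R σ⁻¹ (1 + σ^{2p} + |μ|^{2p})` for a constant `R = R(p, C)` independent of `μ, σ, φ`. -/
theorem deriv_variance_of_polynomially_bounded
    (C : ℝ) (hC : 0 < C) (p : ℕ) :
    ∃ R : ℝ, 0 < R ∧
      ∀ φ : ℝ → ℝ, Measurable φ → (∀ x, |φ x| ≤ C * (1 + |x| ^ p)) →
        ∀ σ : ℝ, 0 < σ → ∀ μ : ℝ,
          ∃ d : ℝ,
            HasDerivAt
              (fun m : ℝ => variance (fun y : ℝ => φ (σ * y + m)) (gaussianReal 0 1)) d μ ∧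
            |d| ≤ R * σ⁻¹ * (1 + σ ^ (2 * p) + |μ| ^ (2 * p)) := by
  obtain ⟨K1, hK1, hcore1⟩ := aux_core p
  obtain ⟨K2, hK2, hcore2⟩ := aux_core (2*p)
  obtain ⟨Km, hKm, hmean⟩ := aux_mean_bound p
  refine ⟨C^2 * (2*K2 + 6*Km*K1) + 1, by positivity, fun φ hφ hbφ σ hσ μ => ?_⟩
  set γ := gaussianReal 0 1 with hγ
  have hφ2b : ∀ x, |φ x ^ 2| ≤ (2*C^2) * (1 + |x|^(2*p)) := by
    intro x
    have h1 := hbφ x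
    have h3 : |x|^(2*p) = (|x|^p)^2 := pow_mul' |x| 2 p
    rw [abs_pow, h3]
    nlinarith [mul_self_le_mul_self (abs_nonneg (φ x)) h1,
      mul_nonneg (sq_nonneg C) (sq_nonneg (|x|^p - 1)), pow_nonneg (abs_nonneg x) p]
  have hD2 : (0:ℝ) ≤ 2*C^2 := by positivity
  have hφ2m : Measurable (fun x => φ x ^ 2) := hφ.pow_const 2
  obtain ⟨d2, hd2, hd2b⟩ := hcore2 (2*C^2) hD2 (fun x => φ x ^ 2) hφ2m hφ2b σ hσ μ
  obtain ⟨d1, hd1, hd1b⟩ := hcore1 C hC.le φ hφ hbφ σ hσ μ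
  have hF1b := hmean C hC.le φ hφ hbφ σ hσ μ
  have hmem : ∀ m : ℝ, MemLp (fun y => φ (σ*y+m)) 2 γ := by
    intro m
    refine (memLp_two_iff_integrable_sq
      (hφ.comp (by fun_prop : Measurable fun y : ℝ => σ*y+m)).aestronglyMeasurable).2 ?_
    exact aux_comp_integrable (fun x => φ x ^ 2) hφ2m hD2 (2*p) hφ2b hσ m
  have hvar : (fun m : ℝ => variance (fun y => φ (σ * y + m)) γ)
      = fun m => (∫ y, φ (σ*y+m)^2 ∂γ) - (∫ y, φ (σ*y+m) ∂γ)^2 := by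
    funext m
    rw [variance_eq_sub (hmem m)]
    congr 1
  set F1 : ℝ := ∫ y, φ (σ*y+μ) ∂γ with hF1
  refine ⟨d2 - 2 * F1 * d1, ?_, ?_⟩
  · rw [hvar]
    have hpow : HasDerivAt (fun m => (∫ y, φ (σ*y+m) ∂γ)^2) (2 * F1 * d1) μ := by
      simpa using hd1.fun_pow 2
    exact hd2.sub hpow
  · have h1 : |d2 - 2*F1*d1| ≤ |d2| + 2 * |F1| * |d1| := by
      have := abs_sub d2 (2*F1*d1)
      rw [abs_mul, abs_mul, abs_two] at this
      linarith [this]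
    have hb2 : 2 * |F1| * |d1| ≤ 2*((Km*C*(1+σ^p+|μ|^p))*(K1*C*σ⁻¹*(1+σ^p+|μ|^p))) := by
      have h := mul_le_mul hF1b hd1b (abs_nonneg d1) (by positivity)
      linarith [h]
    have ha : σ^(2*p) = (σ^p)^2 := pow_mul' σ 2 p
    have hbμ : |μ|^(2*p) = (|μ|^p)^2 := pow_mul' |μ| 2 p
    have hY2 : (1+σ^p+|μ|^p)^2 ≤ 3 * (1 + σ^(2*p) + |μ|^(2*p)) := by
      rw [ha, hbμ]
      nlinarith [sq_nonneg (σ^p - |μ|^p), sq_nonneg (σ^p - 1), sq_nonneg (|μ|^p - 1)]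
    have hσi : (0:ℝ) < σ⁻¹ := by positivity
    have hX : (0:ℝ) < 1 + σ^(2*p) + |μ|^(2*p) := by positivity
    have hkey : (0:ℝ) ≤ (2*Km*K1*C^2*σ⁻¹) * (3 * (1 + σ^(2*p) + |μ|^(2*p)) - (1+σ^p+|μ|^p)^2) :=
      mul_nonneg (by positivity) (sub_nonneg.2 hY2)
    nlinarith [h1, hb2, hd2b, mul_pos hσi hX, hkey]
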